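/- Let a < b, α, β ∈ (0,1), μ ∈ ℂ, i ≥ 1 an integer, and let f, g : [a,b] → ℝ be such that for each 0 ≤ j ≤ i the iterated derivatives (D^{α,β}_μ)^j g and (D^{β,α}_{−μ})^j f exist, are continuous, and are continuously differentiable when j < i (so that each application of the fractional integration-by-parts formula is valid), with all the products appearing below integrable. If (D^{α,β}_μ)^j g(a) = (D^{α,β}_μ)^j g(b) = 0 for every 0 ≤ j ≤ i−1, then ∫_a^b f(t) · ((D^{α,β}_μ)^i g)(t) dt = (−1)^i ∫_a^b ((D^{β,α}_{−μ})^i f)(t) · g(t) dt. -/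

import Mathlib

open MeasureTheory intervalIntegral

/-- Left Riemann–Liouville derivative of order `α ∈ (0,1)` of a complex-valued function:
`(ₐD_t^α x)(t) = (1/Γ(1−α)) (d/dt) ∫_a^t (t−s)^(−α) x(s) ds`. -/
noncomputable def RLlC (a α : ℝ) (x : ℝ → ℂ) (t : ℝ) : ℂ :=
  (Real.Gamma (1 - α))⁻¹ • deriv (fun τ => ∫ s in a..τ, ((τ - s) ^ (-α) : ℝ) • x s) t

/-- Right Riemann–Liouville derivative of order `α ∈ (0,1)` of a complex-valued function:
`(ₜD_b^α x)(t) = −(1/Γ(1−α)) (d/dt) ∫_t^b (s−t)^(−α) x(s) ds`. -/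
noncomputable def RLrC (b α : ℝ) (x : ℝ → ℂ) (t : ℝ) : ℂ :=
  -((Real.Gamma (1 - α))⁻¹ • deriv (fun τ => ∫ s in τ..b, ((s - τ) ^ (-α) : ℝ) • x s) t)

/-- The fractional operator of order `(α,β)` with parameter `μ`:
`D^{α,β}_μ x = (1/2)(ₐD_t^α x − ₜD_b^β x) + (iμ/2)(ₐD_t^α x + ₜD_b^β x)`. -/
noncomputable def Dfrac (a b α β : ℝ) (μ : ℂ) (x : ℝ → ℂ) : ℝ → ℂ := fun t =>
  (1 / 2 : ℂ) * (RLlC a α x t - RLrC b β x t)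
    + Complex.I * μ / 2 * (RLlC a α x t + RLrC b β x t)

/-- Existence of the left RL derivative of order `α` and of the right RL derivative of
order `β` on `(a,b)`. -/
def HasRLpair (a b α β : ℝ) (x : ℝ → ℂ) : Prop :=
  (∀ t ∈ Set.Ioo a b,
    DifferentiableAt ℝ (fun τ => ∫ s in a..τ, ((τ - s) ^ (-α) : ℝ) • x s) t) ∧
  (∀ t ∈ Set.Ioo a b,
    DifferentiableAt ℝ (fun τ => ∫ s in τ..b, ((s - τ) ^ (-β) : ℝ) • x s) t)

/-- The fractional operator applied componentwise to a real vector-valued function. -/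
noncomputable def DfracV {d : ℕ} (a b α β : ℝ) (μ : ℂ) (x : ℝ → Fin d → ℝ)
    (t : ℝ) (i : Fin d) : ℂ :=
  Dfrac a b α β μ (fun s => ((x s i : ℝ) : ℂ)) t

/-! ### Auxiliary lemmas for the fractional integration by parts formula -/

open Set

section Aux

lemma intInt_ofReal {f : ℝ → ℝ} {a b : ℝ} (h : IntervalIntegrable f volume a b) :
    IntervalIntegrable (fun x => ((f x : ℝ) : ℂ)) volume a b :=
  ⟨h.1.ofReal, h.2.ofReal⟩

lemma kint_left {γ : ℝ} (hγ : γ < 1) {w : ℝ → ℂ} {A B : ℝ} (hw : ContinuousOn w (uIcc A B))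
    (c : ℝ) : IntervalIntegrable (fun r => ((c - r) ^ (-γ) : ℝ) • w r) volume A B := by
  have h0 : IntervalIntegrable (fun x : ℝ => x ^ (-γ)) volume (c - A) (c - B) :=
    intervalIntegral.intervalIntegrable_rpow' (by linarith)
  have h1 : IntervalIntegrable (fun r => ((c - r) ^ (-γ) : ℝ)) volume A B := by
    simpa using h0.comp_sub_left c
  have h2 := (intInt_ofReal h1).mul_continuousOn hw
  simpa [Complex.real_smul] using h2

lemma kint_right {γ : ℝ} (hγ : γ < 1) {w : ℝ → ℂ} {A B : ℝ} (hw : ContinuousOn w (uIcc A B))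
    (c : ℝ) : IntervalIntegrable (fun r => ((r - c) ^ (-γ) : ℝ) • w r) volume A B := by
  have h0 : IntervalIntegrable (fun x : ℝ => x ^ (-γ)) volume (A - c) (B - c) :=
    intervalIntegral.intervalIntegrable_rpow' (by linarith)
  have h1 : IntervalIntegrable (fun r => ((r - c) ^ (-γ) : ℝ)) volume A B := by
    simpa using h0.comp_sub_right c
  have h2 := (intInt_ofReal h1).mul_continuousOn hw
  simpa [Complex.real_smul] using h2

lemma cont_rpow {e : ℝ} (he : 0 < e) : Continuous fun x : ℝ => x ^ e :=
  continuous_iff_continuousAt.2 fun x => Real.continuousAt_rpow_const x e (Or.inr he.le)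

lemma smul_cancel {c : ℝ} (hc : c ≠ 0) {x y : ℂ} (h : x = c • y) : y = (c⁻¹ : ℝ) • x := by
  rw [h, smul_smul, inv_mul_cancel₀ hc, one_smul]

lemma exists_derivext {a b : ℝ} (hab : a < b) {u : ℝ → ℂ}
    (hu : ContDiffOn ℝ 1 u (Set.Icc a b)) :
    ∃ u' : ℝ → ℂ, Continuous u' ∧ (∀ x ∈ Set.Ioo a b, HasDerivAt u (u' x) x) := by
  refine ⟨Set.IccExtend hab.le ((Set.Icc a b).restrict (derivWithin u (Set.Icc a b))), ?_, ?_⟩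
  · exact Continuous.Icc_extend'
      (ContinuousOn.restrict (hu.continuousOn_derivWithin (uniqueDiffOn_Icc hab) le_rfl))
  · intro x hx
    have hd := (hu.differentiableOn one_ne_zero x (Ioo_subset_Icc_self hx)).hasDerivWithinAt
    have h2 := hd.hasDerivAt (Icc_mem_nhds hx.1 hx.2)
    have h3 : Set.IccExtend hab.le ((Set.Icc a b).restrict (derivWithin u (Set.Icc a b))) x
        = derivWithin u (Set.Icc a b) x := by
      rw [Set.IccExtend_of_mem hab.le _ (Ioo_subset_Icc_self hx)]
      rfl
    rw [h3]; exact h2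

lemma rep_right' {γ a b : ℝ} (hγ1 : γ < 1)
    {w w' : ℝ → ℂ} (hw : ContinuousOn w (Icc a b))
    (hw' : ∀ x ∈ Ioo a b, HasDerivAt w (w' x) x)
    {s t : ℝ} (has : a ≤ s) (hst : s ≤ t) (htb : t ≤ b)
    (hK : IntervalIntegrable (fun r => ((r - s) ^ (-γ) : ℝ) • w r) volume s t)
    (hK1 : IntervalIntegrable (fun r => ((r - s) ^ (1 - γ) : ℝ) • w' r) volume s t) :
    ∫ r in s..t, ((r - s) ^ (1 - γ) : ℝ) • w' r
      = ((t - s) ^ (1 - γ) : ℝ) • w t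
        - ((1 - γ) : ℝ) • ∫ r in s..t, ((r - s) ^ (-γ) : ℝ) • w r := by
  have h1γ : (0:ℝ) < 1 - γ := by linarith
  set ψ : ℝ → ℂ := fun r => ((r - s) ^ (1 - γ) : ℝ) • w r with hψ
  have hsub : Icc s t ⊆ Icc a b := Icc_subset_Icc has htb
  have hψc : ContinuousOn ψ (Icc s t) :=
    (((cont_rpow h1γ).comp (continuous_id.sub continuous_const)).continuousOn).smul
      (hw.mono hsub)
  have hderiv : ∀ r ∈ Ioo s t, HasDerivAt ψ
      (((r - s) ^ (1 - γ) : ℝ) • w' r + (((1 - γ) * (r - s) ^ (-γ) : ℝ)) • w r) r := by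
    intro r hr
    have hne : r - s ≠ 0 := by
      have := hr.1; intro h; nlinarith [hr.1]
    have hbase := Real.hasDerivAt_rpow_const (x := r - s) (p := 1 - γ) (Or.inl hne)
    have hinner : HasDerivAt (fun x : ℝ => x - s) 1 r := by
      simpa using (hasDerivAt_id r).sub_const s
    have hk : HasDerivAt (fun x : ℝ => ((x - s) ^ (1 - γ) : ℝ))
        ((1 - γ) * (r - s) ^ (1 - γ - 1) * 1) r := by
      have := hbase.comp r hinner; exact this
    have he : (1:ℝ) - γ - 1 = -γ := by ring
    rw [he, mul_one] at hk
    have hwr : HasDerivAt w (w' r) r := hw' r ⟨lt_of_le_of_lt has hr.1, lt_of_lt_of_le hr.2 htb⟩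
    exact hk.smul hwr
  have hint : IntervalIntegrable
      (fun r => ((r - s) ^ (1 - γ) : ℝ) • w' r + (((1 - γ) * (r - s) ^ (-γ) : ℝ)) • w r)
      volume s t := by
    refine IntervalIntegrable.add hK1 ?_
    have : (fun r => (((1 - γ) * (r - s) ^ (-γ) : ℝ)) • w r)
        = fun r => ((1 - γ):ℝ) • (((r - s) ^ (-γ) : ℝ) • w r) := by
      funext r; rw [smul_smul]
    rw [this]; exact (by have := hK.smul (1 - γ : ℝ); exact this)
  have hFTC := intervalIntegral.integral_eq_sub_of_hasDeriv_right_of_le hst hψc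
    (fun x hx => (hderiv x hx).hasDerivWithinAt) hint
  have hψt : ψ t = ((t - s) ^ (1 - γ) : ℝ) • w t := rfl
  have hψs : ψ s = 0 := by
    simp [hψ, Real.zero_rpow (by linarith : (1:ℝ) - γ ≠ 0)]
  rw [intervalIntegral.integral_add hK1 (by
      have : (fun r => (((1 - γ) * (r - s) ^ (-γ) : ℝ)) • w r)
          = fun r => ((1 - γ):ℝ) • (((r - s) ^ (-γ) : ℝ) • w r) := by
        funext r; rw [smul_smul]
      rw [this]; exact (by have := hK.smul (1 - γ : ℝ); exact this))] at hFTC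
  have hpull : ∫ r in s..t, (((1 - γ) * (r - s) ^ (-γ) : ℝ)) • w r
      = ((1 - γ):ℝ) • ∫ r in s..t, ((r - s) ^ (-γ) : ℝ) • w r := by
    rw [← intervalIntegral.integral_smul]
    congr 1; funext r; rw [smul_smul]
  rw [hpull, hψt, hψs, sub_zero] at hFTC
  linear_combination hFTC

lemma rep_left' {γ a b : ℝ} (hγ1 : γ < 1)
    {w w' : ℝ → ℂ} (hw : ContinuousOn w (Icc a b))
    (hw' : ∀ x ∈ Ioo a b, HasDerivAt w (w' x) x)
    {s t : ℝ} (has : a ≤ s) (hst : s ≤ t) (htb : t ≤ b)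
    (hK : IntervalIntegrable (fun r => ((t - r) ^ (-γ) : ℝ) • w r) volume s t)
    (hK1 : IntervalIntegrable (fun r => ((t - r) ^ (1 - γ) : ℝ) • w' r) volume s t) :
    ∫ r in s..t, ((t - r) ^ (1 - γ) : ℝ) • w' r
      = -(((t - s) ^ (1 - γ) : ℝ) • w s)
        + ((1 - γ) : ℝ) • ∫ r in s..t, ((t - r) ^ (-γ) : ℝ) • w r := by
  have h1γ : (0:ℝ) < 1 - γ := by linarith
  set φ : ℝ → ℂ := fun r => ((t - r) ^ (1 - γ) : ℝ) • w r with hφ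
  have hsub : Icc s t ⊆ Icc a b := Icc_subset_Icc has htb
  have hφc : ContinuousOn φ (Icc s t) :=
    (((cont_rpow h1γ).comp (continuous_const.sub continuous_id)).continuousOn).smul
      (hw.mono hsub)
  have hderiv : ∀ r ∈ Ioo s t, HasDerivAt φ
      (((t - r) ^ (1 - γ) : ℝ) • w' r + (((1 - γ) * (t - r) ^ (-γ) * (-1) : ℝ)) • w r) r := by
    intro r hr
    have hne : t - r ≠ 0 := by
      have := hr.2; intro h; nlinarith [hr.2]
    have hbase := Real.hasDerivAt_rpow_const (x := t - r) (p := 1 - γ) (Or.inl hne)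
    have hinner : HasDerivAt (fun x : ℝ => t - x) (-1) r := by
      simpa using (hasDerivAt_id r).const_sub t
    have hk : HasDerivAt (fun x : ℝ => ((t - x) ^ (1 - γ) : ℝ))
        ((1 - γ) * (t - r) ^ (1 - γ - 1) * (-1)) r := hbase.comp r hinner
    have he : (1:ℝ) - γ - 1 = -γ := by ring
    rw [he] at hk
    have hwr : HasDerivAt w (w' r) r := hw' r ⟨lt_of_le_of_lt has hr.1, lt_of_lt_of_le hr.2 htb⟩
    exact hk.smul hwr
  have heq2 : (fun r => (((1 - γ) * (t - r) ^ (-γ) * (-1) : ℝ)) • w r)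
      = fun r => (-(1 - γ):ℝ) • (((t - r) ^ (-γ) : ℝ) • w r) := by
    funext r; rw [smul_smul]; ring_nf
  have hint2 : IntervalIntegrable
      (fun r => (((1 - γ) * (t - r) ^ (-γ) * (-1) : ℝ)) • w r) volume s t := by
    rw [heq2]; exact (by have := hK.smul (-(1 - γ) : ℝ); exact this)
  have hint : IntervalIntegrable
      (fun r => ((t - r) ^ (1 - γ) : ℝ) • w' r
        + (((1 - γ) * (t - r) ^ (-γ) * (-1) : ℝ)) • w r) volume s t :=
    IntervalIntegrable.add hK1 hint2
  have hFTC := intervalIntegral.integral_eq_sub_of_hasDeriv_right_of_le hst hφc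
    (fun x hx => (hderiv x hx).hasDerivWithinAt) hint
  have hφt : φ t = 0 := by
    simp [hφ, Real.zero_rpow (by linarith : (1:ℝ) - γ ≠ 0)]
  have hφs : φ s = ((t - s) ^ (1 - γ) : ℝ) • w s := rfl
  rw [intervalIntegral.integral_add hK1 hint2] at hFTC
  have hpull : ∫ r in s..t, (((1 - γ) * (t - r) ^ (-γ) * (-1) : ℝ)) • w r
      = (-(1 - γ):ℝ) • ∫ r in s..t, ((t - r) ^ (-γ) : ℝ) • w r := by
    rw [heq2, intervalIntegral.integral_smul]
  rw [hpull, hφt, hφs] at hFTC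
  have : (-(1 - γ):ℝ) • (∫ r in s..t, ((t - r) ^ (-γ) : ℝ) • w r)
      = -(((1 - γ):ℝ) • ∫ r in s..t, ((t - r) ^ (-γ) : ℝ) • w r) := by
    rw [neg_smul]
  rw [this] at hFTC
  linear_combination hFTC

end Aux
lemma fubini_tri {a b : ℝ} (hab : a ≤ b) (H : ℝ → ℝ → ℂ)
    (hH : Continuous (Function.uncurry H)) :
    ∫ t in a..b, (∫ s in a..t, H t s) = ∫ s in a..b, (∫ t in s..b, H t s) := by
  set μ := volume.restrict (Ioc a b) with hμ
  have hfin : IsFiniteMeasure μ := by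
    constructor
    rw [hμ, Measure.restrict_apply_univ]
    exact measure_Ioc_lt_top
  set T : Set (ℝ × ℝ) := {p : ℝ × ℝ | p.2 ≤ p.1} with hT
  have hTm : MeasurableSet T := (isClosed_le continuous_snd continuous_fst).measurableSet
  set G : ℝ × ℝ → ℂ := T.indicator (Function.uncurry H) with hG
  have hGm : AEStronglyMeasurable G (μ.prod μ) :=
    (hH.stronglyMeasurable.indicator hTm).aestronglyMeasurable
  obtain ⟨C, hC⟩ : ∃ C, ∀ p ∈ Icc a b ×ˢ Icc a b, ‖Function.uncurry H p‖ ≤ C :=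
    (isCompact_Icc.prod isCompact_Icc).exists_bound_of_continuousOn hH.continuousOn
  have hGint : Integrable G (μ.prod μ) := by
    refine ⟨hGm, ?_⟩
    refine MeasureTheory.HasFiniteIntegral.of_bounded (C := max C 0) ?_
    have hprod : μ.prod μ = (volume.prod volume).restrict (Ioc a b ×ˢ Ioc a b) := by
      rw [hμ, Measure.prod_restrict]
    have hps : ∀ᵐ p ∂(μ.prod μ), p ∈ Ioc a b ×ˢ Ioc a b := by
      rw [hprod]
      exact ae_restrict_mem (measurableSet_Ioc.prod measurableSet_Ioc)
    filter_upwards [hps] with p hp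
    by_cases hpT : p ∈ T
    · rw [hG, Set.indicator_of_mem hpT]
      refine le_trans (hC p ⟨Ioc_subset_Icc_self hp.1, Ioc_subset_Icc_self hp.2⟩) (le_max_left _ _)
    · rw [hG, Set.indicator_of_notMem hpT]
      simp
  have hswap : ∫ t, (∫ s, G (t, s) ∂μ) ∂μ = ∫ s, (∫ t, G (t, s) ∂μ) ∂μ := by
    have := MeasureTheory.integral_integral_swap (μ := μ) (ν := μ)
      (f := fun t s => G (t, s)) (by exact hGint)
    exact this
  have hL : ∫ t in a..b, (∫ s in a..t, H t s) = ∫ t, (∫ s, G (t, s) ∂μ) ∂μ := by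
    rw [intervalIntegral.integral_of_le hab, hμ]
    refine setIntegral_congr_fun measurableSet_Ioc ?_
    intro t ht
    have h1 : (fun s => G (t, s)) = (Iic t).indicator (H t) := by
      funext s
      simp only [hG, hT, Set.indicator_apply, Set.mem_setOf_eq, Set.mem_Iic, Function.uncurry]
    show (∫ s in a..t, H t s) = ∫ s in Ioc a b, G (t, s)
    rw [h1, MeasureTheory.integral_indicator measurableSet_Iic, Measure.restrict_restrict measurableSet_Iic]
    have h2 : Iic t ∩ Ioc a b = Ioc a t := by
      ext x
      simp only [mem_inter_iff, mem_Iic, mem_Ioc]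
      exact ⟨fun ⟨h1', h2'⟩ => ⟨h2'.1, h1'⟩, fun ⟨h1', h2'⟩ => ⟨h2', h1', le_trans h2' ht.2⟩⟩
    rw [h2, intervalIntegral.integral_of_le ht.1.le]
  have hR : ∫ s in a..b, (∫ t in s..b, H t s) = ∫ s, (∫ t, G (t, s) ∂μ) ∂μ := by
    rw [intervalIntegral.integral_of_le hab, hμ]
    refine setIntegral_congr_fun measurableSet_Ioc ?_
    intro s hs
    have h1 : (fun t => G (t, s)) = (Ici s).indicator (fun t => H t s) := by
      funext t
      simp only [hG, hT, Set.indicator_apply, Set.mem_setOf_eq, Set.mem_Ici, Function.uncurry]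
    show (∫ t in s..b, H t s) = ∫ t in Ioc a b, G (t, s)
    rw [h1, MeasureTheory.integral_indicator measurableSet_Ici, Measure.restrict_restrict measurableSet_Ici]
    have h2 : Ici s ∩ Ioc a b = Icc s b := by
      ext x
      simp only [mem_inter_iff, mem_Ici, mem_Ioc, mem_Icc]
      exact ⟨fun ⟨h1', h2'⟩ => ⟨h1', h2'.2⟩, fun ⟨h1', h2'⟩ => ⟨h1', lt_of_lt_of_le hs.1 h1', h2'⟩⟩
    rw [h2, integral_Icc_eq_integral_Ioc, intervalIntegral.integral_of_le hs.2]
  rw [hL, hR, hswap]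

section Pot

/-- Left kernel primitive. -/
noncomputable def Pker (a e : ℝ) (w : ℝ → ℂ) (t : ℝ) : ℂ :=
  ∫ s in a..t, ((t - s) ^ e : ℝ) • w s

/-- Right kernel primitive. -/
noncomputable def Qker (b e : ℝ) (w : ℝ → ℂ) (t : ℝ) : ℂ :=
  ∫ s in t..b, ((s - t) ^ e : ℝ) • w s

/-- Potential whose derivative is `Dfrac`. -/
noncomputable def Phi (a b α β : ℝ) (μ : ℂ) (v : ℝ → ℂ) (t : ℝ) : ℂ :=
  (1/2 + Complex.I * μ / 2) * (((Real.Gamma (1 - α))⁻¹ : ℝ) • Pker a (-α) v t)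
    - (Complex.I * μ / 2 - 1/2) * (((Real.Gamma (1 - β))⁻¹ : ℝ) • Qker b (-β) v t)

lemma cont_prim_left {e : ℝ} (he : 0 < e) {w : ℝ → ℂ} (hw : Continuous w) (a : ℝ) :
    Continuous (Pker a e w) := by
  have hun : Continuous (Function.uncurry fun (t s : ℝ) => ((t - s) ^ e : ℝ) • w s) := by
    show Continuous fun p : ℝ × ℝ => ((p.1 - p.2) ^ e : ℝ) • w p.2
    exact (((cont_rpow he).comp (continuous_fst.sub continuous_snd))).smul
      (hw.comp continuous_snd)
  exact intervalIntegral.continuous_parametric_intervalIntegral_of_continuous hun continuous_id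

lemma cont_prim_right {e : ℝ} (he : 0 < e) {w : ℝ → ℂ} (hw : Continuous w) (b : ℝ) :
    Continuous (Qker b e w) := by
  have hun : Continuous (Function.uncurry fun (t s : ℝ) => ((s - t) ^ e : ℝ) • w s) := by
    show Continuous fun p : ℝ × ℝ => ((p.2 - p.1) ^ e : ℝ) • w p.2
    exact (((cont_rpow he).comp (continuous_snd.sub continuous_fst))).smul
      (hw.comp continuous_snd)
  have hA : Continuous fun t : ℝ => ∫ s in (0:ℝ)..b, ((s - t) ^ e : ℝ) • w s :=
    intervalIntegral.continuous_parametric_intervalIntegral_of_continuous' hun 0 b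
  have hB : Continuous fun t : ℝ => ∫ s in (0:ℝ)..t, ((s - t) ^ e : ℝ) • w s :=
    intervalIntegral.continuous_parametric_intervalIntegral_of_continuous hun continuous_id
  have h1 : Qker b e w
      = fun t : ℝ => (∫ s in (0:ℝ)..b, ((s - t) ^ e : ℝ) • w s)
          - ∫ s in (0:ℝ)..t, ((s - t) ^ e : ℝ) • w s := by
    funext t
    have hi : ∀ A B : ℝ, IntervalIntegrable (fun s => ((s - t) ^ e : ℝ) • w s) volume A B :=
      fun A B => (((cont_rpow he).comp (continuous_id.sub continuous_const)).smul
        hw).intervalIntegrable A B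
    rw [eq_sub_iff_add_eq, add_comm]
    exact intervalIntegral.integral_add_adjacent_intervals (hi 0 t) (hi t b)
  rw [h1]; exact hA.sub hB

variable {γ a b : ℝ} {w w' : ℝ → ℂ}

lemma Pker_rep (hγ0 : 0 < γ) (hγ1 : γ < 1)
    (hw : ContinuousOn w (Icc a b)) (hw' : ∀ x ∈ Ioo a b, HasDerivAt w (w' x) x)
    (hw'c : Continuous w') {t : ℝ} (hat : a ≤ t) (htb : t ≤ b) :
    Pker a (1 - γ) w' t = -(((t - a) ^ (1 - γ) : ℝ) • w a)
      + ((1 - γ) : ℝ) • Pker a (-γ) w t := by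
  have h1γ : (0:ℝ) < 1 - γ := by linarith
  have hK : IntervalIntegrable (fun r => ((t - r) ^ (-γ) : ℝ) • w r) volume a t := by
    refine kint_left hγ1 (hw.mono ?_) t
    rw [uIcc_of_le hat]; exact Icc_subset_Icc le_rfl htb
  have hK1 : IntervalIntegrable (fun r => ((t - r) ^ (1 - γ) : ℝ) • w' r) volume a t :=
    (((cont_rpow h1γ).comp (continuous_const.sub continuous_id)).smul hw'c).intervalIntegrable a t
  exact rep_left' hγ1 hw hw' le_rfl hat htb hK hK1

lemma Qker_rep (hγ0 : 0 < γ) (hγ1 : γ < 1)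
    (hw : ContinuousOn w (Icc a b)) (hw' : ∀ x ∈ Ioo a b, HasDerivAt w (w' x) x)
    (hw'c : Continuous w') {t : ℝ} (hat : a ≤ t) (htb : t ≤ b) :
    Qker b (1 - γ) w' t = ((b - t) ^ (1 - γ) : ℝ) • w b
      - ((1 - γ) : ℝ) • Qker b (-γ) w t := by
  have h1γ : (0:ℝ) < 1 - γ := by linarith
  have hK : IntervalIntegrable (fun r => ((r - t) ^ (-γ) : ℝ) • w r) volume t b := by
    refine kint_right hγ1 (hw.mono ?_) t
    rw [uIcc_of_le htb]; exact Icc_subset_Icc hat le_rfl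
  have hK1 : IntervalIntegrable (fun r => ((r - t) ^ (1 - γ) : ℝ) • w' r) volume t b :=
    (((cont_rpow h1γ).comp (continuous_id.sub continuous_const)).smul hw'c).intervalIntegrable t b
  exact rep_right' hγ1 hw hw' hat htb le_rfl hK hK1

lemma Pker_contOn (hγ0 : 0 < γ) (hγ1 : γ < 1)
    (hw : ContinuousOn w (Icc a b)) (hw' : ∀ x ∈ Ioo a b, HasDerivAt w (w' x) x)
    (hw'c : Continuous w') :
    ContinuousOn (Pker a (-γ) w) (Icc a b) := by
  have h1γ : (0:ℝ) < 1 - γ := by linarith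
  have hg : Continuous (fun t => (((1 - γ)⁻¹ : ℝ)) •
      (Pker a (1 - γ) w' t + ((t - a) ^ (1 - γ) : ℝ) • w a)) :=
    by
      have h1 := cont_prim_left h1γ hw'c a
      have h2 : Continuous fun t : ℝ => ((t - a) ^ (1 - γ) : ℝ) :=
        (cont_rpow h1γ).comp (continuous_id.sub continuous_const)
      fun_prop
  refine hg.continuousOn.congr ?_
  intro t ht
  have h := Pker_rep hγ0 hγ1 hw hw' hw'c ht.1 ht.2
  have h2 : Pker a (1 - γ) w' t + ((t - a) ^ (1 - γ) : ℝ) • w a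
      = ((1 - γ) : ℝ) • Pker a (-γ) w t := by
    rw [h]; exact neg_add_cancel_comm _ _
  exact smul_cancel (ne_of_gt h1γ) h2

lemma Qker_contOn (hγ0 : 0 < γ) (hγ1 : γ < 1)
    (hw : ContinuousOn w (Icc a b)) (hw' : ∀ x ∈ Ioo a b, HasDerivAt w (w' x) x)
    (hw'c : Continuous w') :
    ContinuousOn (Qker b (-γ) w) (Icc a b) := by
  have h1γ : (0:ℝ) < 1 - γ := by linarith
  have hg : Continuous (fun t => (((1 - γ)⁻¹ : ℝ)) •
      (((b - t) ^ (1 - γ) : ℝ) • w b - Qker b (1 - γ) w' t)) :=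
    by
      have h1 := cont_prim_right h1γ hw'c b
      have h2 : Continuous fun t : ℝ => ((b - t) ^ (1 - γ) : ℝ) :=
        (cont_rpow h1γ).comp (continuous_const.sub continuous_id)
      fun_prop
  refine hg.continuousOn.congr ?_
  intro t ht
  have h := Qker_rep hγ0 hγ1 hw hw' hw'c ht.1 ht.2
  have h2 : ((b - t) ^ (1 - γ) : ℝ) • w b - Qker b (1 - γ) w' t
      = ((1 - γ) : ℝ) • Qker b (-γ) w t := by
    rw [h]; exact sub_sub_cancel _ _
  exact smul_cancel (ne_of_gt h1γ) h2

lemma Phi_hasDeriv {α β : ℝ} (μ : ℂ) {v : ℝ → ℂ} {t : ℝ} (ht : t ∈ Set.Ioo a b)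
    (hex : HasRLpair a b α β v) :
    HasDerivAt (Phi a b α β μ v) (Dfrac a b α β μ v t) t := by
  have hP := ((hex.1 t ht).hasDerivAt).const_smul ((Real.Gamma (1 - α))⁻¹ : ℝ)
  have hQ := ((hex.2 t ht).hasDerivAt).const_smul ((Real.Gamma (1 - β))⁻¹ : ℝ)
  have h := (hP.const_mul (1/2 + Complex.I * μ / 2)).sub
    (hQ.const_mul (Complex.I * μ / 2 - 1/2))
  convert h using 1
  · rfl
  · rfl
  simp only [Dfrac, RLlC, RLrC, Complex.real_smul]
  ring

lemma Phi_contOn {α β : ℝ} (hα0 : 0 < α) (hα1 : α < 1) (hβ0 : 0 < β) (hβ1 : β < 1) (μ : ℂ)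
    {v v' : ℝ → ℂ} (hv : ContinuousOn v (Icc a b))
    (hv' : ∀ x ∈ Ioo a b, HasDerivAt v (v' x) x) (hv'c : Continuous v') :
    ContinuousOn (Phi a b α β μ v) (Icc a b) := by
  unfold Phi
  have hP := Pker_contOn hα0 hα1 hv hv' hv'c
  have hQ := Qker_contOn hβ0 hβ1 hv hv' hv'c
  fun_prop

end Pot

section Main

lemma ibp_step {a b : ℝ} (hab : a < b) {α β : ℝ}
    (hα : α ∈ Set.Ioo (0:ℝ) 1) (hβ : β ∈ Set.Ioo (0:ℝ) 1) (μ : ℂ)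
    {u v : ℝ → ℂ}
    (hu : ContDiffOn ℝ 1 u (Set.Icc a b)) (hv : ContDiffOn ℝ 1 v (Set.Icc a b))
    (hva : v a = 0) (hvb : v b = 0)
    (hvex : HasRLpair a b α β v) (huex : HasRLpair a b β α u)
    (h1 : IntervalIntegrable (fun t => u t * Dfrac a b α β μ v t) volume a b)
    (h2 : IntervalIntegrable (fun t => Dfrac a b β α (-μ) u t * v t) volume a b) :
    ∫ t in a..b, u t * Dfrac a b α β μ v t
      = - ∫ t in a..b, Dfrac a b β α (-μ) u t * v t := by
  obtain ⟨hα0, hα1⟩ := hα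
  obtain ⟨hβ0, hβ1⟩ := hβ
  have h1α : (0:ℝ) < 1 - α := by linarith
  have h1β : (0:ℝ) < 1 - β := by linarith
  have huIcc : uIcc a b = Icc a b := uIcc_of_le hab.le
  obtain ⟨u', hu'c, hu'd⟩ := exists_derivext hab hu
  obtain ⟨v', hv'c, hv'd⟩ := exists_derivext hab hv
  have huc := hu.continuousOn
  have hvc := hv.continuousOn
  have hP1cont : ContinuousOn (Pker a (-α) v) (Icc a b) := Pker_contOn hα0 hα1 hvc hv'd hv'c
  have hQ1cont : ContinuousOn (Qker b (-β) v) (Icc a b) := Qker_contOn hβ0 hβ1 hvc hv'd hv'c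
  have hP2cont : ContinuousOn (Pker a (-β) u) (Icc a b) := Pker_contOn hβ0 hβ1 huc hu'd hu'c
  have hQ2cont : ContinuousOn (Qker b (-α) u) (Icc a b) := Qker_contOn hα0 hα1 huc hu'd hu'c
  have hΦc : ContinuousOn (Phi a b α β μ v) (Icc a b) :=
    Phi_contOn hα0 hα1 hβ0 hβ1 μ hvc hv'd hv'c
  have hΨc : ContinuousOn (Phi a b β α (-μ) u) (Icc a b) :=
    Phi_contOn hβ0 hβ1 hα0 hα1 (-μ) huc hu'd hu'c
  have hP1rep : ∀ t ∈ Icc a b, Pker a (-α) v t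
      = (((1 - α)⁻¹ : ℝ)) • Pker a (1 - α) v' t := by
    intro t ht
    have h := Pker_rep hα0 hα1 hvc hv'd hv'c ht.1 ht.2
    rw [hva, smul_zero, neg_zero, zero_add] at h
    exact smul_cancel (ne_of_gt h1α) h
  have hQ1rep : ∀ t ∈ Icc a b, Qker b (-β) v t
      = ((-(1 - β))⁻¹ : ℝ) • Qker b (1 - β) v' t := by
    intro t ht
    have h := Qker_rep hβ0 hβ1 hvc hv'd hv'c ht.1 ht.2
    rw [hvb, smul_zero, zero_sub, ← neg_smul] at h
    exact smul_cancel (neg_ne_zero.2 (ne_of_gt h1β)) h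
  have hΦd : ∀ t ∈ Ioo a b, HasDerivAt (Phi a b α β μ v) (Dfrac a b α β μ v t) t :=
    fun t ht => Phi_hasDeriv μ ht hvex
  have hΨd : ∀ t ∈ Ioo a b, HasDerivAt (Phi a b β α (-μ) u) (Dfrac a b β α (-μ) u t) t :=
    fun t ht => Phi_hasDeriv (-μ) ht huex
  -- Step 1 : integration by parts for ∫ u · (Dfrac v)
  have hiuphi : IntervalIntegrable (fun t => u' t * Phi a b α β μ v t) volume a b := by
    apply ContinuousOn.intervalIntegrable
    rw [huIcc]; exact hu'c.continuousOn.mul hΦc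
  have hFTC1 := intervalIntegral.integral_eq_sub_of_hasDeriv_right_of_le hab.le
    (huc.mul hΦc)
    (fun t ht => ((hu'd t ht).mul (hΦd t ht)).hasDerivWithinAt)
    (hiuphi.add h1)
  rw [intervalIntegral.integral_add hiuphi h1] at hFTC1
  -- Step 2 : integration by parts for ∫ (Dfrac' u) · v
  have hipsiv : IntervalIntegrable (fun t => Phi a b β α (-μ) u t * v' t) volume a b := by
    apply ContinuousOn.intervalIntegrable
    rw [huIcc]; exact hΨc.mul hv'c.continuousOn
  have hFTC2 := intervalIntegral.integral_eq_sub_of_hasDeriv_right_of_le hab.le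
    (hΨc.mul hvc)
    (fun t ht => ((hΨd t ht).mul (hv'd t ht)).hasDerivWithinAt)
    (h2.add hipsiv)
  rw [intervalIntegral.integral_add h2 hipsiv] at hFTC2
  simp only [Pi.mul_apply, hva, hvb, mul_zero, sub_zero] at hFTC2
  -- T alpha
  have i5 : IntervalIntegrable (fun s => (((b - s) ^ (1 - α) : ℝ) • u b) * v' s) volume a b :=
    ((((cont_rpow h1α).comp (continuous_const.sub continuous_id)).smul
      continuous_const).mul hv'c).intervalIntegrable a b
  have i6 : IntervalIntegrable (fun s => (((1 - α) : ℝ) • Qker b (-α) u s) * v' s) volume a b := by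
    apply ContinuousOn.intervalIntegrable
    rw [huIcc]; fun_prop
  have hTα : u b * Pker a (-α) v b - (∫ t in a..b, u' t * Pker a (-α) v t)
      - (∫ s in a..b, Qker b (-α) u s * v' s) = 0 := by
    have e1 : ∫ t in a..b, u' t * Pker a (-α) v t
        = (((1 - α)⁻¹ : ℝ)) • ∫ t in a..b,
            ∫ r in a..t, u' t * (((t - r) ^ (1 - α) : ℝ) • v' r) := by
      rw [← intervalIntegral.integral_smul]
      apply intervalIntegral.integral_congr
      intro t ht
      rw [huIcc] at ht
      show u' t * Pker a (-α) v t
        = (((1 - α)⁻¹ : ℝ)) • ∫ r in a..t, u' t * (((t - r) ^ (1 - α) : ℝ) • v' r)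
      rw [intervalIntegral.integral_const_mul, hP1rep t ht, mul_smul_comm]
      rfl
    have e2 := fubini_tri hab.le (fun t s => u' t * (((t - s) ^ (1 - α) : ℝ) • v' s)) (by
      show Continuous fun p : ℝ × ℝ => u' p.1 * (((p.1 - p.2) ^ (1 - α) : ℝ) • v' p.2)
      exact (hu'c.comp continuous_fst).mul
        ((((cont_rpow h1α).comp (continuous_fst.sub continuous_snd))).smul
          (hv'c.comp continuous_snd)))
    have e3 : ∀ s ∈ Icc a b, (∫ t in s..b, u' t * (((t - s) ^ (1 - α) : ℝ) • v' s))
        = (((b - s) ^ (1 - α) : ℝ) • u b) * v' s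
          - (((1 - α) : ℝ) • Qker b (-α) u s) * v' s := by
      intro s hs
      have hmove : (fun t => u' t * (((t - s) ^ (1 - α) : ℝ) • v' s))
          = fun t => (((t - s) ^ (1 - α) : ℝ) • u' t) * v' s := by
        funext t; rw [mul_smul_comm, smul_mul_assoc]
      rw [hmove, intervalIntegral.integral_mul_const, ← sub_mul]
      congr 1
      exact Qker_rep hα0 hα1 huc hu'd hu'c hs.1 hs.2
    have e4 : ∫ s in a..b, (∫ t in s..b, u' t * (((t - s) ^ (1 - α) : ℝ) • v' s))
        = (∫ s in a..b, (((b - s) ^ (1 - α) : ℝ) • u b) * v' s)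
          - ∫ s in a..b, (((1 - α) : ℝ) • Qker b (-α) u s) * v' s := by
      rw [← intervalIntegral.integral_sub i5 i6]
      apply intervalIntegral.integral_congr
      intro s hs
      rw [huIcc] at hs
      exact e3 s hs
    have e7 : u b * Pker a (-α) v b
        = (((1 - α)⁻¹ : ℝ)) • ∫ s in a..b, (((b - s) ^ (1 - α) : ℝ) • u b) * v' s := by
      rw [hP1rep b ⟨hab.le, le_rfl⟩, mul_smul_comm]
      congr 1
      show u b * Pker a (1 - α) v' b = _
      unfold Pker
      rw [← intervalIntegral.integral_const_mul]
      apply intervalIntegral.integral_congr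
      intro s hs
      show u b * (((b - s) ^ (1 - α) : ℝ) • v' s) = (((b - s) ^ (1 - α) : ℝ) • u b) * v' s
      rw [mul_smul_comm, smul_mul_assoc]
    have e8 : ∫ s in a..b, (((1 - α) : ℝ) • Qker b (-α) u s) * v' s
        = ((1 - α) : ℝ) • ∫ s in a..b, Qker b (-α) u s * v' s := by
      rw [← intervalIntegral.integral_smul]
      apply intervalIntegral.integral_congr
      intro s hs
      show (((1 - α) : ℝ) • Qker b (-α) u s) * v' s
        = ((1 - α) : ℝ) • (Qker b (-α) u s * v' s)
      rw [smul_mul_assoc]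
    rw [e1, e2, e4, e8, e7]
    simp only [Complex.real_smul, Complex.ofReal_inv]
    have hne : (1 : ℂ) - (α : ℂ) ≠ 0 := by
      have := Complex.ofReal_ne_zero.mpr (ne_of_gt h1α)
      push_cast at this
      exact this
    field_simp
    have hc : ∀ s : ℝ, u b * ((((b - s) ^ (1 - α) : ℝ)) : ℂ) * v' s
        = ((((b - s) ^ (1 - α) : ℝ)) : ℂ) * u b * v' s := fun s => by ring
    have hc' : (((1 - α : ℝ)) : ℂ) ≠ 0 := Complex.ofReal_ne_zero.mpr (ne_of_gt h1α)
    simp only [hc, sub_sub_cancel, mul_div_cancel_left₀ _ hc', sub_self]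
  -- T beta
  have j5 : IntervalIntegrable (fun r => (((r - a) ^ (1 - β) : ℝ) • u a) * v' r) volume a b :=
    ((((cont_rpow h1β).comp (continuous_id.sub continuous_const)).smul
      continuous_const).mul hv'c).intervalIntegrable a b
  have j6 : IntervalIntegrable (fun r => (((1 - β) : ℝ) • Pker a (-β) u r) * v' r) volume a b := by
    apply ContinuousOn.intervalIntegrable
    rw [huIcc]; fun_prop
  have hTβ : u a * Qker b (-β) v a + (∫ t in a..b, u' t * Qker b (-β) v t)
      + (∫ r in a..b, Pker a (-β) u r * v' r) = 0 := by
    have f1 : ∫ t in a..b, u' t * Qker b (-β) v t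
        = ((-(1 - β))⁻¹ : ℝ) • ∫ t in a..b,
            ∫ r in t..b, u' t * (((r - t) ^ (1 - β) : ℝ) • v' r) := by
      rw [← intervalIntegral.integral_smul]
      apply intervalIntegral.integral_congr
      intro t ht
      rw [huIcc] at ht
      show u' t * Qker b (-β) v t
        = ((-(1 - β))⁻¹ : ℝ) • ∫ r in t..b, u' t * (((r - t) ^ (1 - β) : ℝ) • v' r)
      rw [intervalIntegral.integral_const_mul, hQ1rep t ht, mul_smul_comm]
      rfl
    have f2 := (fubini_tri hab.le (fun r t => u' t * (((r - t) ^ (1 - β) : ℝ) • v' r)) (by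
      show Continuous fun p : ℝ × ℝ => u' p.2 * (((p.1 - p.2) ^ (1 - β) : ℝ) • v' p.1)
      exact (hu'c.comp continuous_snd).mul
        ((((cont_rpow h1β).comp (continuous_fst.sub continuous_snd))).smul
          (hv'c.comp continuous_fst)))).symm
    have f3 : ∀ r ∈ Icc a b, (∫ t in a..r, u' t * (((r - t) ^ (1 - β) : ℝ) • v' r))
        = (((1 - β) : ℝ) • Pker a (-β) u r) * v' r
          - (((r - a) ^ (1 - β) : ℝ) • u a) * v' r := by
      intro r hr
      have hmove : (fun t => u' t * (((r - t) ^ (1 - β) : ℝ) • v' r))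
          = fun t => (((r - t) ^ (1 - β) : ℝ) • u' t) * v' r := by
        funext t; rw [mul_smul_comm, smul_mul_assoc]
      rw [hmove, intervalIntegral.integral_mul_const]
      have := Pker_rep hβ0 hβ1 huc hu'd hu'c hr.1 hr.2
      show Pker a (1 - β) u' r * v' r = _
      rw [this, add_mul, neg_mul, neg_add_eq_sub]
    have f4 : ∫ r in a..b, (∫ t in a..r, u' t * (((r - t) ^ (1 - β) : ℝ) • v' r))
        = (∫ r in a..b, (((1 - β) : ℝ) • Pker a (-β) u r) * v' r)
          - ∫ r in a..b, (((r - a) ^ (1 - β) : ℝ) • u a) * v' r := by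
      rw [← intervalIntegral.integral_sub j6 j5]
      apply intervalIntegral.integral_congr
      intro r hr
      rw [huIcc] at hr
      exact f3 r hr
    have f5 : u a * Qker b (-β) v a
        = ((-(1 - β))⁻¹ : ℝ) • ∫ r in a..b, (((r - a) ^ (1 - β) : ℝ) • u a) * v' r := by
      rw [hQ1rep a ⟨le_rfl, hab.le⟩, mul_smul_comm]
      congr 1
      show u a * Qker b (1 - β) v' a = _
      unfold Qker
      rw [← intervalIntegral.integral_const_mul]
      apply intervalIntegral.integral_congr
      intro s hs
      show u a * (((s - a) ^ (1 - β) : ℝ) • v' s) = (((s - a) ^ (1 - β) : ℝ) • u a) * v' s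
      rw [mul_smul_comm, smul_mul_assoc]
    have f6 : ∫ r in a..b, (((1 - β) : ℝ) • Pker a (-β) u r) * v' r
        = ((1 - β) : ℝ) • ∫ r in a..b, Pker a (-β) u r * v' r := by
      rw [← intervalIntegral.integral_smul]
      apply intervalIntegral.integral_congr
      intro r hr
      show (((1 - β) : ℝ) • Pker a (-β) u r) * v' r
        = ((1 - β) : ℝ) • (Pker a (-β) u r * v' r)
      rw [smul_mul_assoc]
    rw [f1, f2, f4, f6, f5]
    simp only [Complex.real_smul, Complex.ofReal_inv, Complex.ofReal_neg]
    have hne : (1 : ℂ) - (β : ℂ) ≠ 0 := by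
      have := Complex.ofReal_ne_zero.mpr (ne_of_gt h1β)
      push_cast at this
      exact this
    have hne2 : (-1 : ℂ) + (β : ℂ) ≠ 0 := by
      intro h; apply hne; linear_combination -h
    have hne3 : (β : ℂ) - 1 ≠ 0 := by
      intro h; apply hne; linear_combination -h
    field_simp [hne2]
    have hc : ∀ r : ℝ, u a * ((((r - a) ^ (1 - β) : ℝ)) : ℂ) * v' r
        = ((((r - a) ^ (1 - β) : ℝ)) : ℂ) * u a * v' r := fun r => by ring
    have hc' : (((1 - β : ℝ)) : ℂ) ≠ 0 := Complex.ofReal_ne_zero.mpr (ne_of_gt h1β)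
    simp only [hc]
    rw [div_add' _ _ _ hc', div_eq_zero_iff]
    left
    ring
  -- endpoint values of Phi
  have hQ1b : Qker b (-β) v b = 0 := intervalIntegral.integral_same
  have hP1a : Pker a (-α) v a = 0 := intervalIntegral.integral_same
  have hΦb : Phi a b α β μ v b
      = (1/2 + Complex.I * μ / 2) * (((Real.Gamma (1 - α))⁻¹ : ℝ) • Pker a (-α) v b) := by
    unfold Phi; rw [hQ1b, smul_zero, mul_zero, sub_zero]
  have hΦa : Phi a b α β μ v a
      = -((Complex.I * μ / 2 - 1/2) * (((Real.Gamma (1 - β))⁻¹ : ℝ) • Qker b (-β) v a)) := by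
    unfold Phi; rw [hP1a, smul_zero, mul_zero, zero_sub]
  -- splitting of the two mixed integrals
  have ha1 : IntervalIntegrable (fun t => u' t * Pker a (-α) v t) volume a b := by
    apply ContinuousOn.intervalIntegrable
    rw [huIcc]; exact hu'c.continuousOn.mul hP1cont
  have ha2 : IntervalIntegrable (fun t => u' t * Qker b (-β) v t) volume a b := by
    apply ContinuousOn.intervalIntegrable
    rw [huIcc]; exact hu'c.continuousOn.mul hQ1cont
  have hb1 : IntervalIntegrable (fun t => Pker a (-β) u t * v' t) volume a b := by
    apply ContinuousOn.intervalIntegrable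
    rw [huIcc]; exact hP2cont.mul hv'c.continuousOn
  have hb2 : IntervalIntegrable (fun t => Qker b (-α) u t * v' t) volume a b := by
    apply ContinuousOn.intervalIntegrable
    rw [huIcc]; exact hQ2cont.mul hv'c.continuousOn
  have hsplit1 : ∫ t in a..b, u' t * Phi a b α β μ v t
      = ((1/2 + Complex.I * μ / 2) * (((Real.Gamma (1 - α))⁻¹ : ℝ) : ℂ))
          * (∫ t in a..b, u' t * Pker a (-α) v t)
        - ((Complex.I * μ / 2 - 1/2) * (((Real.Gamma (1 - β))⁻¹ : ℝ) : ℂ))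
          * (∫ t in a..b, u' t * Qker b (-β) v t) := by
    rw [← intervalIntegral.integral_const_mul, ← intervalIntegral.integral_const_mul,
      ← intervalIntegral.integral_sub (ha1.const_mul _) (ha2.const_mul _)]
    apply intervalIntegral.integral_congr
    intro t ht
    show u' t * Phi a b α β μ v t = _
    unfold Phi
    simp only [Complex.real_smul]
    ring
  have hsplit2 : ∫ t in a..b, Phi a b β α (-μ) u t * v' t
      = ((1/2 + Complex.I * (-μ) / 2) * (((Real.Gamma (1 - β))⁻¹ : ℝ) : ℂ))
          * (∫ t in a..b, Pker a (-β) u t * v' t)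
        - ((Complex.I * (-μ) / 2 - 1/2) * (((Real.Gamma (1 - α))⁻¹ : ℝ) : ℂ))
          * (∫ t in a..b, Qker b (-α) u t * v' t) := by
    rw [← intervalIntegral.integral_const_mul, ← intervalIntegral.integral_const_mul,
      ← intervalIntegral.integral_sub (hb1.const_mul _) (hb2.const_mul _)]
    apply intervalIntegral.integral_congr
    intro t ht
    show Phi a b β α (-μ) u t * v' t = _
    unfold Phi
    simp only [Complex.real_smul]
    ring
  -- assemble
  have hgoal : u b * Phi a b α β μ v b - u a * Phi a b α β μ v a
      - (∫ t in a..b, u' t * Phi a b α β μ v t)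
      = ∫ t in a..b, Phi a b β α (-μ) u t * v' t := by
    rw [hΦb, hΦa, hsplit1, hsplit2]
    simp only [Complex.real_smul]
    linear_combination ((1/2 + Complex.I * μ / 2) * (((Real.Gamma (1 - α))⁻¹ : ℝ) : ℂ)) * hTα
      + ((Complex.I * μ / 2 - 1/2) * (((Real.Gamma (1 - β))⁻¹ : ℝ) : ℂ)) * hTβ
  have hfin : ∫ t in a..b, u t * Dfrac a b α β μ v t
      = u b * Phi a b α β μ v b - u a * Phi a b α β μ v a
        - ∫ t in a..b, u' t * Phi a b α β μ v t := by
    simp only [Pi.mul_apply] at hFTC1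
    linear_combination hFTC1
  rw [hfin, hgoal]
  linear_combination hFTC2

end Main

theorem stmt13 {a b : ℝ} (hab : a < b) {α β : ℝ}
    (hα : α ∈ Set.Ioo (0 : ℝ) 1) (hβ : β ∈ Set.Ioo (0 : ℝ) 1) (μ : ℂ)
    {i : ℕ} (hi : 1 ≤ i) (f g : ℝ → ℝ)
    (hgc : ∀ j ≤ i, ContinuousOn
      ((Dfrac a b α β μ)^[j] fun s => ((g s : ℝ) : ℂ)) (Set.Ioo a b))
    (hfc : ∀ j ≤ i, ContinuousOn
      ((Dfrac a b β α (-μ))^[j] fun s => ((f s : ℝ) : ℂ)) (Set.Ioo a b))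
    (hgd : ∀ j < i, ContDiffOn ℝ 1
      ((Dfrac a b α β μ)^[j] fun s => ((g s : ℝ) : ℂ)) (Set.Icc a b))
    (hfd : ∀ j < i, ContDiffOn ℝ 1
      ((Dfrac a b β α (-μ))^[j] fun s => ((f s : ℝ) : ℂ)) (Set.Icc a b))
    (hgex : ∀ j < i, HasRLpair a b α β ((Dfrac a b α β μ)^[j] fun s => ((g s : ℝ) : ℂ)))
    (hfex : ∀ j < i, HasRLpair a b β α ((Dfrac a b β α (-μ))^[j] fun s => ((f s : ℝ) : ℂ)))
    (hint : ∀ j ≤ i, IntervalIntegrable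
      (fun t => ((Dfrac a b β α (-μ))^[j] (fun s => ((f s : ℝ) : ℂ)) t)
        * ((Dfrac a b α β μ)^[i - j] (fun s => ((g s : ℝ) : ℂ)) t)) volume a b)
    (hbc : ∀ j < i, (Dfrac a b α β μ)^[j] (fun s => ((g s : ℝ) : ℂ)) a = 0 ∧
      (Dfrac a b α β μ)^[j] (fun s => ((g s : ℝ) : ℂ)) b = 0) :
    ∫ t in a..b, ((f t : ℝ) : ℂ) * (Dfrac a b α β μ)^[i] (fun s => ((g s : ℝ) : ℂ)) t
      = (-1 : ℂ) ^ i *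
        ∫ t in a..b, ((Dfrac a b β α (-μ))^[i] (fun s => ((f s : ℝ) : ℂ)) t) * ((g t : ℝ) : ℂ) := by
  set fC : ℝ → ℂ := fun s => ((f s : ℝ) : ℂ) with hfC
  set gC : ℝ → ℂ := fun s => ((g s : ℝ) : ℂ) with hgC
  have key : ∀ j, j ≤ i →
      (∫ t in a..b, fC t * (Dfrac a b α β μ)^[i] gC t)
        = (-1 : ℂ) ^ j * ∫ t in a..b,
            ((Dfrac a b β α (-μ))^[j] fC t) * ((Dfrac a b α β μ)^[i - j] gC t) := by
    intro j
    induction j with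
    | zero => intro _; simp
    | succ k ih =>
      intro hj
      have hk : k ≤ i := le_of_lt (Nat.lt_of_succ_le hj)
      have hki : k < i := Nat.lt_of_succ_le hj
      have hik : i - (k + 1) < i := by omega
      have hiter1 : (Dfrac a b α β μ)^[i - k] gC
          = Dfrac a b α β μ ((Dfrac a b α β μ)^[i - (k + 1)] gC) := by
        rw [show i - k = (i - (k + 1)) + 1 by omega, Function.iterate_succ_apply']
      have hiter2 : (Dfrac a b β α (-μ))^[k + 1] fC
          = Dfrac a b β α (-μ) ((Dfrac a b β α (-μ))^[k] fC) :=
        Function.iterate_succ_apply' _ _ _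
      have hint1 := hint k hk
      rw [hiter1] at hint1
      have hint2 := hint (k + 1) hj
      rw [hiter2] at hint2
      have hstep := ibp_step hab hα hβ μ
        (hfd k hki) (hgd (i - (k + 1)) hik)
        ((hbc (i - (k + 1)) hik).1) ((hbc (i - (k + 1)) hik).2)
        (hgex (i - (k + 1)) hik) (hfex k hki)
        hint1 hint2
      rw [ih hk, hiter1, hstep, hiter2, pow_succ]
      ring
  have h := key i le_rfl
  rw [Nat.sub_self] at h
  simpa using h
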